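/- arXiv:2108.13467 — 4 statements merged into one kernel-verified Lean document; each statement's English description precedes it below -/
import Mathlib

section
/- Let (V, ω) be a symplectic vector space over ℝ and L₁, L₂, L₃ Lagrangian subspaces. For x₁, x₁' ∈ L₁ ∩ (L₂ + L₃), define Ψ(x₁, x₁') = ω(x₁, x₂'), where x₂' ∈ L₂ and x₃' ∈ L₃ are any vectors with x₁' + x₂' + x₃' = 0. Then Ψ(x₁, x₁') is independent of the choice of x₂' and x₃'. -/
/-- A subspace `L` of a symplectic vector space `(V, ω)` is Lagrangian if it equals
its own `ω`-orthogonal complement. -/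
def IsLagrangian {V : Type*} [AddCommGroup V] [Module ℝ V]
    (ω : LinearMap.BilinForm ℝ V) (L : Submodule ℝ V) : Prop :=
  ω.orthogonal L = L

/-- **The Wall form is well defined.**
Let `(V, ω)` be a symplectic vector space over `ℝ` and `L₁, L₂, L₃` Lagrangian
subspaces.  For `x₁, x₁' ∈ L₁ ∩ (L₂ + L₃)` set `Ψ(x₁, x₁') = ω(x₁, x₂')` where
`x₂' ∈ L₂`, `x₃' ∈ L₃` are any vectors with `x₁' + x₂' + x₃' = 0`.  Then the value
`ω(x₁, x₂')` is independent of the choice of `x₂'` and `x₃'`. -/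
theorem wall_form_well_defined
    {V : Type*} [AddCommGroup V] [Module ℝ V] [FiniteDimensional ℝ V]
    (ω : LinearMap.BilinForm ℝ V) (halt : ω.IsAlt) (hnd : ω.Nondegenerate)
    (L₁ L₂ L₃ : Submodule ℝ V)
    (h₁ : IsLagrangian ω L₁) (h₂ : IsLagrangian ω L₂) (h₃ : IsLagrangian ω L₃)
    (x₁ : V) (hx₁ : x₁ ∈ L₁ ⊓ (L₂ ⊔ L₃))
    (x₁' : V) (hx₁' : x₁' ∈ L₁ ⊓ (L₂ ⊔ L₃))
    (x₂' y₂' : V) (hx₂' : x₂' ∈ L₂) (hy₂' : y₂' ∈ L₂)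
    (x₃' y₃' : V) (hx₃' : x₃' ∈ L₃) (hy₃' : y₃' ∈ L₃)
    (hsum : x₁' + x₂' + x₃' = 0) (hsum' : x₁' + y₂' + y₃' = 0) :
    ω x₁ x₂' = ω x₁ y₂' := by
  obtain ⟨hx₁L, hx₁S⟩ := hx₁
  obtain ⟨a, ha, b, hb, hab⟩ := Submodule.mem_sup.mp hx₁S
  have hd2 : x₂' - y₂' ∈ L₂ := sub_mem hx₂' hy₂'
  have heq : x₂' - y₂' = y₃' - x₃' := by
    have h12 : x₁' + (x₂' + x₃') = x₁' + (y₂' + y₃') := by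
      rw [← add_assoc, ← add_assoc, hsum, hsum']
    have hkey := add_left_cancel h12
    rw [sub_eq_sub_iff_add_eq_add, add_comm y₃']
    exact hkey
  have hd3 : x₂' - y₂' ∈ L₃ := heq ▸ sub_mem hy₃' hx₃'
  have hωa : ω a (x₂' - y₂') = 0 := by
    rw [← h₂] at hd2
    exact hd2 a ha
  have hωb : ω b (x₂' - y₂') = 0 := by
    rw [← h₃] at hd3
    exact hd3 b hb
  have : ω x₁ (x₂' - y₂') = 0 := by
    rw [← hab, map_add, LinearMap.add_apply, hωa, hωb, add_zero]
  rw [map_sub, sub_eq_zero] at this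
  exact this
end

section
/- Let (V, ω) be a symplectic vector space over ℝ and L₁, L₂, L₃ Lagrangian subspaces. The bilinear form Ψ on L₁ ∩ (L₂ + L₃) defined by Ψ(x₁, x₁') = ω(x₁, x₂') (where x₁' + x₂' + x₃' = 0 with x₂' ∈ L₂, x₃' ∈ L₃) is symmetric: Ψ(x₁, x₁') = Ψ(x₁', x₁) for all x₁, x₁' ∈ L₁ ∩ (L₂ + L₃). -/
/-- **The Wall form is symmetric.**
Let `(V, ω)` be a symplectic vector space over `ℝ` and `L₁, L₂, L₃` Lagrangian
subspaces.  The Wall form on `L₁ ∩ (L₂ + L₃)` is defined by `Ψ(x₁, x₁') = ω(x₁, x₂')`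
where `x₁' + x₂' + x₃' = 0` with `x₂' ∈ L₂`, `x₃' ∈ L₃`.  It is symmetric:
`Ψ(x₁, x₁') = Ψ(x₁', x₁)`, i.e. `ω(x₁, x₂') = ω(x₁', x₂)` for decompositions
`x₁ + x₂ + x₃ = 0` and `x₁' + x₂' + x₃' = 0`. -/
theorem wall_form_symmetric
    {V : Type*} [AddCommGroup V] [Module ℝ V] [FiniteDimensional ℝ V]
    (ω : LinearMap.BilinForm ℝ V) (halt : ω.IsAlt) (hnd : ω.Nondegenerate)
    (L₁ L₂ L₃ : Submodule ℝ V)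
    (h₁ : IsLagrangian ω L₁) (h₂ : IsLagrangian ω L₂) (h₃ : IsLagrangian ω L₃)
    (x₁ : V) (hx₁ : x₁ ∈ L₁ ⊓ (L₂ ⊔ L₃))
    (x₁' : V) (hx₁' : x₁' ∈ L₁ ⊓ (L₂ ⊔ L₃))
    (x₂ x₂' : V) (hx₂ : x₂ ∈ L₂) (hx₂' : x₂' ∈ L₂)
    (x₃ x₃' : V) (hx₃ : x₃ ∈ L₃) (hx₃' : x₃' ∈ L₃)
    (hsum : x₁ + x₂ + x₃ = 0) (hsum' : x₁' + x₂' + x₃' = 0) :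
    ω x₁ x₂' = ω x₁' x₂ := by
  have zero : ∀ {L : Submodule ℝ V}, IsLagrangian ω L → ∀ a ∈ L, ∀ b ∈ L, ω a b = 0 := by
    intro L hL a ha b hb
    exact (LinearMap.BilinForm.mem_orthogonal_iff.mp (hL.symm ▸ hb)) a ha
  have z11 : ω x₁ x₁' = 0 := zero h₁ x₁ hx₁.1 x₁' hx₁'.1
  have z22 : ω x₂ x₂' = 0 := zero h₂ x₂ hx₂ x₂' hx₂'
  have z33 : ω x₃ x₃' = 0 := zero h₃ x₃ hx₃ x₃' hx₃'
  have E1 : ω x₁ x₁' + ω x₁ x₂' + ω x₁ x₃' = 0 := by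
    have : ω x₁ (x₁' + x₂' + x₃') = 0 := by rw [hsum']; simp
    simpa [map_add] using this
  have E2 : ω x₁ x₃' + ω x₂ x₃' + ω x₃ x₃' = 0 := by
    have : ω (x₁ + x₂ + x₃) x₃' = 0 := by rw [hsum]; simp
    simpa [map_add] using this
  have E3 : ω x₂ x₁' + ω x₂ x₂' + ω x₂ x₃' = 0 := by
    have : ω x₂ (x₁' + x₂' + x₃') = 0 := by rw [hsum']; simp
    simpa [map_add] using this
  have skew : ω x₂ x₁' = - ω x₁' x₂ := by
    rw [← halt.neg_eq x₁' x₂]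
  linarith
end

section
/- Let (V, ω) be a symplectic vector space over ℝ and L₁, L₂, L₃ Lagrangian subspaces. The Wall form Ψ on L₁ ∩ (L₂ + L₃) vanishes on the subspace L₁ ∩ L₂ + L₁ ∩ L₃; that is, if x₁' ∈ L₁ ∩ L₂ + L₁ ∩ L₃ then Ψ(x₁, x₁') = 0 for all x₁ ∈ L₁ ∩ (L₂ + L₃). Hence Ψ descends to a symmetric bilinear form on the quotient (L₁ ∩ (L₂ + L₃)) / (L₁ ∩ L₂ + L₁ ∩ L₃). -/
/-- **The Wall form vanishes on `L₁ ∩ L₂ + L₁ ∩ L₃`.**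
Let `(V, ω)` be a symplectic vector space over `ℝ` and `L₁, L₂, L₃` Lagrangian
subspaces, and let `Ψ(x₁, x₁') = ω(x₁, x₂')` (where `x₁' + x₂' + x₃' = 0`,
`x₂' ∈ L₂`, `x₃' ∈ L₃`) be the Wall form on `L₁ ∩ (L₂ + L₃)`.  If
`x₁' ∈ L₁ ∩ L₂ + L₁ ∩ L₃` then `Ψ(x₁, x₁') = 0` for all `x₁ ∈ L₁ ∩ (L₂ + L₃)`.
Hence `Ψ` descends to a symmetric bilinear form on the quotient
`(L₁ ∩ (L₂ + L₃)) / (L₁ ∩ L₂ + L₁ ∩ L₃)`. -/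
theorem wall_form_vanishes_on_sub
    {V : Type*} [AddCommGroup V] [Module ℝ V] [FiniteDimensional ℝ V]
    (ω : LinearMap.BilinForm ℝ V) (halt : ω.IsAlt) (hnd : ω.Nondegenerate)
    (L₁ L₂ L₃ : Submodule ℝ V)
    (h₁ : IsLagrangian ω L₁) (h₂ : IsLagrangian ω L₂) (h₃ : IsLagrangian ω L₃)
    (x₁ : V) (hx₁ : x₁ ∈ L₁ ⊓ (L₂ ⊔ L₃))
    (x₁' : V) (hx₁' : x₁' ∈ (L₁ ⊓ L₂) ⊔ (L₁ ⊓ L₃))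
    (x₂' : V) (hx₂' : x₂' ∈ L₂)
    (x₃' : V) (hx₃' : x₃' ∈ L₃)
    (hsum : x₁' + x₂' + x₃' = 0) :
    ω x₁ x₂' = 0 := by
  have key : ∀ (L : Submodule ℝ V), IsLagrangian ω L → ∀ x ∈ L, ∀ y ∈ L, ω x y = 0 := by
    intro L hL x hx y hy
    rw [IsLagrangian] at hL
    rw [← hL] at hy
    exact hy x hx
  rw [Submodule.mem_inf] at hx₁
  obtain ⟨hx₁L₁, hx₁sup⟩ := hx₁
  rw [Submodule.mem_sup] at hx₁sup
  obtain ⟨y₂, hy₂, y₃, hy₃, hxy⟩ := hx₁sup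
  rw [Submodule.mem_sup] at hx₁'
  obtain ⟨a, ⟨haL₁, haL₂⟩, b, ⟨hbL₁, hbL₃⟩, hab⟩ := hx₁'
  have hx₁'L₁ : x₁' ∈ L₁ := hab ▸ L₁.add_mem haL₁ hbL₁
  have e1 : ω x₁ x₁' = 0 := key L₁ h₁ x₁ hx₁L₁ x₁' hx₁'L₁
  have e2 : ω y₃ x₃' = 0 := key L₃ h₃ y₃ hy₃ x₃' hx₃'
  have e3 : ω y₂ a = 0 := key L₂ h₂ y₂ hy₂ a haL₂
  have e4 : ω y₂ x₂' = 0 := key L₂ h₂ y₂ hy₂ x₂' hx₂'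
  have e5 : ω x₁ b = 0 := key L₁ h₁ x₁ hx₁L₁ b hbL₁
  have e6 : ω y₃ b = 0 := key L₃ h₃ y₃ hy₃ b hbL₃
  have e7 : ω y₂ b = 0 := by
    have hy : y₂ = x₁ - y₃ := by rw [← hxy]; abel
    rw [hy, map_sub, LinearMap.sub_apply, e5, e6, sub_zero]
  have e8 : ω y₂ x₃' = 0 := by
    have h3 : x₃' = -a - b - x₂' := by
      rw [← hab] at hsum
      have : x₃' + (a + b + x₂') = 0 := by rw [← hsum]; abel
      have := eq_neg_of_add_eq_zero_left this
      rw [this]; abel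
    rw [h3]
    simp only [map_sub, map_neg, e3, e4, e7]
    ring
  have h2 : x₂' = -x₁' - x₃' := by
    have : x₂' + (x₁' + x₃') = 0 := by rw [← hsum]; abel
    have := eq_neg_of_add_eq_zero_left this
    rw [this]; abel
  have e1' : ω y₂ x₁' + ω y₃ x₁' = 0 := by
    rw [← hxy, map_add, LinearMap.add_apply] at e1
    exact e1
  rw [h2, ← hxy]
  simp only [map_add, map_sub, map_neg, LinearMap.add_apply, LinearMap.sub_apply,
    LinearMap.neg_apply]
  rw [e8] at *
  linarith [e2, e1']
end

section
/- Let (V, ω) be a symplectic vector space over ℝ and L₁, L₂, L₃ Lagrangian subspaces. The Wall signature is totally antisymmetric under permutations: for any permutation τ of {1,2,3}, σ(V; L_{τ(1)}, L_{τ(2)}, L_{τ(3)}) = sgn(τ) · σ(V; L₁, L₂, L₃). -/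
/-- The Wall pairing `Ψ(x, y) = ω(x, y₂)`, where `y + y₂ + y₃ = 0` with `y₂ ∈ L₂`,
`y₃ ∈ L₃` is some choice of decomposition (the value is independent of the choice
when the `Lᵢ` are Lagrangian and `x ∈ L₂ + L₃`). -/
noncomputable def wallPsi {V : Type*} [AddCommGroup V] [Module ℝ V]
    (ω : LinearMap.BilinForm ℝ V) (L₂ L₃ : Submodule ℝ V) (x y : V) : ℝ := by
  classical
  exact if h : ∃ q : V × V, q.1 ∈ L₂ ∧ q.2 ∈ L₃ ∧ y + q.1 + q.2 = 0 then ω x h.choose.1 else 0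

/-- The maximal dimension of a subspace of `L₁ ⊓ (L₂ ⊔ L₃)` on which the Wall form is
positive definite. -/
noncomputable def wallPosIndex {V : Type*} [AddCommGroup V] [Module ℝ V]
    (ω : LinearMap.BilinForm ℝ V) (L₁ L₂ L₃ : Submodule ℝ V) : ℕ :=
  sSup {n : ℕ | ∃ W : Submodule ℝ V, W ≤ L₁ ⊓ (L₂ ⊔ L₃) ∧ Module.finrank ℝ W = n ∧
    ∀ x ∈ W, x ≠ 0 → 0 < wallPsi ω L₂ L₃ x x}

/-- The maximal dimension of a subspace of `L₁ ⊓ (L₂ ⊔ L₃)` on which the Wall form is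
negative definite. -/
noncomputable def wallNegIndex {V : Type*} [AddCommGroup V] [Module ℝ V]
    (ω : LinearMap.BilinForm ℝ V) (L₁ L₂ L₃ : Submodule ℝ V) : ℕ :=
  sSup {n : ℕ | ∃ W : Submodule ℝ V, W ≤ L₁ ⊓ (L₂ ⊔ L₃) ∧ Module.finrank ℝ W = n ∧
    ∀ x ∈ W, x ≠ 0 → wallPsi ω L₂ L₃ x x < 0}

/-- `σ(V; L₁, L₂, L₃)`: the signature of the Wall form `Ψ` on `L₁ ⊓ (L₂ + L₃)`
(number of positive minus number of negative eigenvalues). -/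
noncomputable def wallSignature {V : Type*} [AddCommGroup V] [Module ℝ V]
    (ω : LinearMap.BilinForm ℝ V) (L₁ L₂ L₃ : Submodule ℝ V) : ℤ :=
  (wallPosIndex ω L₁ L₂ L₃ : ℤ) - (wallNegIndex ω L₁ L₂ L₃ : ℤ)

section Aux

variable {V : Type*} [AddCommGroup V] [Module ℝ V]

/-- If `x ∈ B ⊔ C` and `z ∈ B ⊓ C` for Lagrangians `B, C`, then `ω x z = 0`. -/
lemma wall_ortho_aux {ω : LinearMap.BilinForm ℝ V} {B C : Submodule ℝ V}
    (hB : IsLagrangian ω B) (hC : IsLagrangian ω C) {x z : V}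
    (hx : x ∈ B ⊔ C) (hzB : z ∈ B) (hzC : z ∈ C) : ω x z = 0 := by
  rcases Submodule.mem_sup.mp hx with ⟨u, hu, v, hv, rfl⟩
  have h1 : ω u z = 0 := by
    have hz' : z ∈ ω.orthogonal B := by rw [hB]; exact hzB
    exact (LinearMap.BilinForm.mem_orthogonal_iff.mp hz') u hu
  have h2 : ω v z = 0 := by
    have hz' : z ∈ ω.orthogonal C := by rw [hC]; exact hzC
    exact (LinearMap.BilinForm.mem_orthogonal_iff.mp hz') v hv
  simp [map_add, h1, h2]

/-- The Wall pairing is computed by any decomposition, provided `x ∈ B ⊔ C`. -/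
lemma wallPsi_eq {ω : LinearMap.BilinForm ℝ V} {B C : Submodule ℝ V}
    (hB : IsLagrangian ω B) (hC : IsLagrangian ω C) {x y a b : V}
    (hx : x ∈ B ⊔ C) (ha : a ∈ B) (hb : b ∈ C) (h : y + a + b = 0) :
    wallPsi ω B C x y = ω x a := by
  have hex : ∃ q : V × V, q.1 ∈ B ∧ q.2 ∈ C ∧ y + q.1 + q.2 = 0 := ⟨(a, b), ha, hb, h⟩
  rw [wallPsi, dif_pos hex]
  obtain ⟨h1, h2, h3⟩ := hex.choose_spec
  have h5 : hex.choose.1 + hex.choose.2 = a + b :=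
    add_left_cancel (a := y) (by rw [← add_assoc, h3, ← add_assoc, h])
  have hd : hex.choose.1 - a = b - hex.choose.2 := by
    rw [sub_eq_sub_iff_add_eq_add, h5, add_comm]
  have hz : ω x (hex.choose.1 - a) = 0 := by
    refine wall_ortho_aux hB hC hx (Submodule.sub_mem _ h1 ha) ?_
    rw [hd]; exact Submodule.sub_mem _ hb h2
  rw [map_sub, sub_eq_zero] at hz
  exact hz

/-- Swapping the last two Lagrangians negates the Wall form diagonal. -/
lemma wallPsi_swap {ω : LinearMap.BilinForm ℝ V} (halt : ω.IsAlt)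
    {B C : Submodule ℝ V} (hB : IsLagrangian ω B) (hC : IsLagrangian ω C)
    {x : V} (hx : x ∈ B ⊔ C) :
    wallPsi ω C B x x = - wallPsi ω B C x x := by
  rcases Submodule.mem_sup.mp hx with ⟨u, hu, v, hv, huv⟩
  have hx' : x ∈ C ⊔ B := (sup_comm B C) ▸ hx
  have hd1 : x + -u + -v = 0 := by rw [← huv]; abel
  have hd2 : x + -v + -u = 0 := by rw [← huv]; abel
  rw [wallPsi_eq hB hC hx (neg_mem hu) (neg_mem hv) hd1,
      wallPsi_eq hC hB hx' (neg_mem hv) (neg_mem hu) hd2]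
  have h0 : ω x u + ω x v = 0 := by
    have : ω x (u + v) = 0 := by rw [huv]; exact halt.self_eq_zero x
    simpa [map_add] using this
  rw [map_neg, map_neg]
  linarith

/-- The key transfer: a subspace of `A ⊓ (B ⊔ C)` on which `Ψ_{B,C}` takes values
satisfying `P` (with `¬ P 0`) produces a subspace of `B ⊓ (C ⊔ A)` of the same dimension
on which `Ψ_{C,A}` takes values satisfying `P`. -/
lemma wall_set_cyc {ω : LinearMap.BilinForm ℝ V} [FiniteDimensional ℝ V]
    (halt : ω.IsAlt) {A B C : Submodule ℝ V}
    (hA : IsLagrangian ω A) (hB : IsLagrangian ω B) (hC : IsLagrangian ω C)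
    {P : ℝ → Prop} (hP0 : ¬ P 0) :
    {n : ℕ | ∃ W : Submodule ℝ V, W ≤ A ⊓ (B ⊔ C) ∧ Module.finrank ℝ W = n ∧
      ∀ x ∈ W, x ≠ 0 → P (wallPsi ω B C x x)} ⊆
    {n : ℕ | ∃ W : Submodule ℝ V, W ≤ B ⊓ (C ⊔ A) ∧ Module.finrank ℝ W = n ∧
      ∀ x ∈ W, x ≠ 0 → P (wallPsi ω C A x x)} := by
  rintro n ⟨W, hW, rfl, hpos⟩
  classical
  set S : Submodule ℝ (V × V) :=
    (W.prod B) ⊓ Submodule.comap (LinearMap.fst ℝ V V + LinearMap.snd ℝ V V) C with hSdef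
  have hmemS : ∀ p : V × V, p ∈ S ↔ p.1 ∈ W ∧ p.2 ∈ B ∧ p.1 + p.2 ∈ C := by
    intro p
    simp [hSdef, Submodule.mem_inf, Submodule.mem_prod, Submodule.mem_comap,
      LinearMap.add_apply, and_assoc]
  -- first projection S → W is surjective
  let F : ↥S →ₗ[ℝ] ↥W :=
    LinearMap.codRestrict W ((LinearMap.fst ℝ V V).comp S.subtype)
      (fun p => ((hmemS p.1).mp p.2).1)
  have hFsurj : LinearMap.range F = ⊤ := by
    rw [LinearMap.range_eq_top]
    intro w
    have hw' : (w : V) ∈ B ⊔ C := (hW w.2).2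
    rcases Submodule.mem_sup.mp hw' with ⟨u, hu, v, hv, huv⟩
    have hmem : ((w : V), -u) ∈ S := by
      rw [hmemS]
      refine ⟨w.2, neg_mem hu, ?_⟩
      have : (w : V) + -u = v := by rw [← huv]; abel
      rw [this]; exact hv
    exact ⟨⟨_, hmem⟩, Subtype.ext rfl⟩
  obtain ⟨g, hg⟩ := F.exists_rightInverse_of_surjective hFsurj
  -- T w is the B-component of the chosen decomposition of w
  let T : ↥W →ₗ[ℝ] V := (LinearMap.snd ℝ V V).comp (S.subtype.comp g)
  have hg1 : ∀ w : ↥W, ((g w : V × V)).1 = (w : V) := by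
    intro w
    have := LinearMap.ext_iff.mp hg w
    exact congrArg Subtype.val this
  have hTB : ∀ w : ↥W, T w ∈ B := fun w => ((hmemS _).mp (g w).2).2.1
  have hTC : ∀ w : ↥W, (w : V) + T w ∈ C := by
    intro w
    have h := ((hmemS _).mp (g w).2).2.2
    rwa [hg1 w] at h
  -- the two Wall form values agree
  have hval : ∀ w : ↥W, wallPsi ω B C (w : V) (w : V) = ω w (T w) := by
    intro w
    refine wallPsi_eq hB hC (hW w.2).2 (hTB w) (neg_mem (hTC w)) (by abel)
  have hval' : ∀ w : ↥W, wallPsi ω C A (T w) (T w) = ω w (T w) := by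
    intro w
    have hTmem : T w ∈ C ⊔ A :=
      Submodule.mem_sup.mpr ⟨(w : V) + T w, hTC w, -(w : V),
        neg_mem (hW w.2).1, by abel⟩
    have := wallPsi_eq hC hA hTmem (neg_mem (hTC w)) (hW w.2).1
      (show T w + -((w : V) + T w) + (w : V) = 0 by abel)
    rw [this, map_neg, map_add, halt.self_eq_zero (T w), add_zero]
    exact LinearMap.IsAlt.neg halt (T w) ↑w
  -- T is injective
  have hTinj : Function.Injective T := by
    rw [← LinearMap.ker_eq_bot]
    rw [Submodule.eq_bot_iff]
    intro w hw
    rw [LinearMap.mem_ker] at hw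
    by_contra hne
    have hwne : (w : V) ≠ 0 := fun h => hne (Subtype.ext h)
    have := hpos (w : V) w.2 hwne
    rw [hval w, hw, map_zero] at this
    exact hP0 this
  refine ⟨LinearMap.range T, ?_, ?_, ?_⟩
  · rintro y ⟨w, rfl⟩
    refine Submodule.mem_inf.mpr ⟨hTB w, Submodule.mem_sup.mpr
      ⟨(w : V) + T w, hTC w, -(w : V), neg_mem (hW w.2).1, by abel⟩⟩
  · exact LinearMap.finrank_range_of_inj hTinj
  · rintro y ⟨w, rfl⟩ hy0
    have hwne : (w : V) ≠ 0 := by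
      intro h
      apply hy0
      have : w = 0 := Subtype.ext h
      rw [this, map_zero]
    have := hpos (w : V) w.2 hwne
    rwa [hval w, ← hval' w] at this

lemma wall_bddAbove {V : Type*} [AddCommGroup V] [Module ℝ V] [FiniteDimensional ℝ V]
    (s : Set ℕ) (h : ∀ n ∈ s, ∃ W : Submodule ℝ V, Module.finrank ℝ W = n) :
    BddAbove s := by
  refine ⟨Module.finrank ℝ V, fun n hn => ?_⟩
  obtain ⟨W, hW⟩ := h n hn
  exact hW ▸ Submodule.finrank_le W

lemma wallPosIndex_cyc_le {ω : LinearMap.BilinForm ℝ V} [FiniteDimensional ℝ V]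
    (halt : ω.IsAlt) {A B C : Submodule ℝ V}
    (hA : IsLagrangian ω A) (hB : IsLagrangian ω B) (hC : IsLagrangian ω C) :
    wallPosIndex ω A B C ≤ wallPosIndex ω B C A := by
  refine csSup_le_csSup ?_ ?_ (wall_set_cyc halt hA hB hC (P := fun r => 0 < r) (by norm_num))
  · exact wall_bddAbove _ (fun n ⟨W, _, hW, _⟩ => ⟨W, hW⟩)
  · exact ⟨0, ⊥, bot_le, finrank_bot ℝ V, fun x hx hx0 =>
      absurd ((Submodule.mem_bot ℝ).mp hx) hx0⟩

lemma wallNegIndex_cyc_le {ω : LinearMap.BilinForm ℝ V} [FiniteDimensional ℝ V]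
    (halt : ω.IsAlt) {A B C : Submodule ℝ V}
    (hA : IsLagrangian ω A) (hB : IsLagrangian ω B) (hC : IsLagrangian ω C) :
    wallNegIndex ω A B C ≤ wallNegIndex ω B C A := by
  refine csSup_le_csSup ?_ ?_ (wall_set_cyc halt hA hB hC (P := fun r => r < 0) (by norm_num))
  · exact wall_bddAbove _ (fun n ⟨W, _, hW, _⟩ => ⟨W, hW⟩)
  · exact ⟨0, ⊥, bot_le, finrank_bot ℝ V, fun x hx hx0 =>
      absurd ((Submodule.mem_bot ℝ).mp hx) hx0⟩

lemma wallSignature_cyc {ω : LinearMap.BilinForm ℝ V} [FiniteDimensional ℝ V]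
    (halt : ω.IsAlt) {A B C : Submodule ℝ V}
    (hA : IsLagrangian ω A) (hB : IsLagrangian ω B) (hC : IsLagrangian ω C) :
    wallSignature ω A B C = wallSignature ω B C A := by
  have hp : wallPosIndex ω A B C = wallPosIndex ω B C A :=
    le_antisymm (wallPosIndex_cyc_le halt hA hB hC)
      (le_trans (wallPosIndex_cyc_le halt hB hC hA) (wallPosIndex_cyc_le halt hC hA hB))
  have hn : wallNegIndex ω A B C = wallNegIndex ω B C A :=
    le_antisymm (wallNegIndex_cyc_le halt hA hB hC)
      (le_trans (wallNegIndex_cyc_le halt hB hC hA) (wallNegIndex_cyc_le halt hC hA hB))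
  rw [wallSignature, wallSignature, hp, hn]

lemma wallPosIndex_swap {ω : LinearMap.BilinForm ℝ V} (halt : ω.IsAlt)
    {A B C : Submodule ℝ V} (hB : IsLagrangian ω B) (hC : IsLagrangian ω C) :
    wallPosIndex ω A C B = wallNegIndex ω A B C := by
  rw [wallPosIndex, wallNegIndex]
  congr 1
  ext n
  constructor
  · rintro ⟨W, hW, hfr, h⟩
    refine ⟨W, by rwa [sup_comm C B] at hW, hfr, fun x hx hx0 => ?_⟩
    have hx' : x ∈ B ⊔ C := by
      have := (hW hx).2
      rwa [sup_comm C B] at this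
    have := h x hx hx0
    rw [wallPsi_swap halt hB hC hx'] at this
    linarith
  · rintro ⟨W, hW, hfr, h⟩
    refine ⟨W, by rwa [sup_comm B C] at hW, hfr, fun x hx hx0 => ?_⟩
    have hx' : x ∈ B ⊔ C := (hW hx).2
    rw [wallPsi_swap halt hB hC hx']
    have := h x hx hx0
    linarith

lemma wallNegIndex_swap {ω : LinearMap.BilinForm ℝ V} (halt : ω.IsAlt)
    {A B C : Submodule ℝ V} (hB : IsLagrangian ω B) (hC : IsLagrangian ω C) :
    wallNegIndex ω A C B = wallPosIndex ω A B C := by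
  rw [wallPosIndex, wallNegIndex]
  congr 1
  ext n
  constructor
  · rintro ⟨W, hW, hfr, h⟩
    refine ⟨W, by rwa [sup_comm C B] at hW, hfr, fun x hx hx0 => ?_⟩
    have hx' : x ∈ B ⊔ C := by
      have := (hW hx).2
      rwa [sup_comm C B] at this
    have := h x hx hx0
    rw [wallPsi_swap halt hB hC hx'] at this
    linarith
  · rintro ⟨W, hW, hfr, h⟩
    refine ⟨W, by rwa [sup_comm B C] at hW, hfr, fun x hx hx0 => ?_⟩
    have hx' : x ∈ B ⊔ C := (hW hx).2
    rw [wallPsi_swap halt hB hC hx']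
    have := h x hx hx0
    linarith

lemma wallSignature_swap {ω : LinearMap.BilinForm ℝ V} (halt : ω.IsAlt)
    {A B C : Submodule ℝ V} (hB : IsLagrangian ω B) (hC : IsLagrangian ω C) :
    wallSignature ω A C B = - wallSignature ω A B C := by
  rw [wallSignature, wallSignature, wallPosIndex_swap halt hB hC,
    wallNegIndex_swap halt hB hC]
  ring

end Aux

/-- **Total antisymmetry of the Wall signature.**
For Lagrangian subspaces `L 0, L 1, L 2` of a symplectic vector space `(V, ω)` and any
permutation `τ` of `{0, 1, 2}`,
`σ(V; L_{τ(0)}, L_{τ(1)}, L_{τ(2)}) = sgn(τ) · σ(V; L₀, L₁, L₂)`. -/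
theorem wall_signature_antisymmetric
    {V : Type*} [AddCommGroup V] [Module ℝ V] [FiniteDimensional ℝ V]
    (ω : LinearMap.BilinForm ℝ V) (halt : ω.IsAlt) (hnd : ω.Nondegenerate)
    (L : Fin 3 → Submodule ℝ V) (hL : ∀ i, IsLagrangian ω (L i))
    (τ : Equiv.Perm (Fin 3)) :
    wallSignature ω (L (τ 0)) (L (τ 1)) (L (τ 2)) =
      ((Equiv.Perm.sign τ : ℤˣ) : ℤ) * wallSignature ω (L 0) (L 1) (L 2) := by
  have cyc : ∀ a b c : Fin 3,
      wallSignature ω (L a) (L b) (L c) = wallSignature ω (L b) (L c) (L a) :=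
    fun a b c => wallSignature_cyc halt (hL a) (hL b) (hL c)
  have swp : ∀ a b c : Fin 3,
      wallSignature ω (L a) (L c) (L b) = - wallSignature ω (L a) (L b) (L c) :=
    fun a b c => wallSignature_swap halt (hL b) (hL c)
  have hτ : τ = 1 ∨ τ = Equiv.swap 0 1 ∨ τ = Equiv.swap 0 2 ∨ τ = Equiv.swap 1 2 ∨
      τ = Equiv.swap 0 1 * Equiv.swap 1 2 ∨ τ = Equiv.swap 1 2 * Equiv.swap 0 1 := by
    revert τ; decide
  have s01 : ((Equiv.Perm.sign (Equiv.swap (0:Fin 3) 1) : ℤˣ) : ℤ) = -1 := by decide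
  have s02 : ((Equiv.Perm.sign (Equiv.swap (0:Fin 3) 2) : ℤˣ) : ℤ) = -1 := by decide
  have s12 : ((Equiv.Perm.sign (Equiv.swap (1:Fin 3) 2) : ℤˣ) : ℤ) = -1 := by decide
  rcases hτ with rfl | rfl | rfl | rfl | rfl | rfl
  · simp
  · have e0 : (Equiv.swap (0:Fin 3) 1) 0 = 1 := by decide
    have e1 : (Equiv.swap (0:Fin 3) 1) 1 = 0 := by decide
    have e2 : (Equiv.swap (0:Fin 3) 1) 2 = 2 := by decide
    rw [e0, e1, e2, s01, cyc 1 0 2, swp 0 1 2]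
    ring
  · have e0 : (Equiv.swap (0:Fin 3) 2) 0 = 2 := by decide
    have e1 : (Equiv.swap (0:Fin 3) 2) 1 = 1 := by decide
    have e2 : (Equiv.swap (0:Fin 3) 2) 2 = 0 := by decide
    rw [e0, e1, e2, s02, cyc 2 1 0, cyc 1 0 2, swp 0 1 2]
    ring
  · have e0 : (Equiv.swap (1:Fin 3) 2) 0 = 0 := by decide
    have e1 : (Equiv.swap (1:Fin 3) 2) 1 = 2 := by decide
    have e2 : (Equiv.swap (1:Fin 3) 2) 2 = 1 := by decide
    rw [e0, e1, e2, s12, swp 0 1 2]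
    ring
  · have e0 : ((Equiv.swap 0 1 * Equiv.swap 1 2 : Equiv.Perm (Fin 3))) 0 = 1 := by decide
    have e1 : ((Equiv.swap 0 1 * Equiv.swap 1 2 : Equiv.Perm (Fin 3))) 1 = 2 := by decide
    have e2 : ((Equiv.swap 0 1 * Equiv.swap 1 2 : Equiv.Perm (Fin 3))) 2 = 0 := by decide
    have hs : ((Equiv.Perm.sign (Equiv.swap 0 1 * Equiv.swap 1 2 : Equiv.Perm (Fin 3)) : ℤˣ) : ℤ) = 1 := by
      decide
    rw [e0, e1, e2, hs, cyc 1 2 0, cyc 2 0 1]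
    ring
  · have e0 : ((Equiv.swap 1 2 * Equiv.swap 0 1 : Equiv.Perm (Fin 3))) 0 = 2 := by decide
    have e1 : ((Equiv.swap 1 2 * Equiv.swap 0 1 : Equiv.Perm (Fin 3))) 1 = 0 := by decide
    have e2 : ((Equiv.swap 1 2 * Equiv.swap 0 1 : Equiv.Perm (Fin 3))) 2 = 1 := by decide
    have hs : ((Equiv.Perm.sign (Equiv.swap 1 2 * Equiv.swap 0 1 : Equiv.Perm (Fin 3)) : ℤˣ) : ℤ) = 1 := by
      decide
    rw [e0, e1, e2, hs, cyc 2 0 1]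
    ring
end
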